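/- For every positive integer s there exists a constant K > 0 such that the following holds: for every finite abelian group G and every real-valued positive definite function f : G → ℝ that is not identically zero, with |supp(f̂)| ≤ s and with supp(f̂) containing at least one character χ such that χ² ≠ 1, one has ν₁(f) − ν₂(f) ≤ K·ν₁(f)·|G|^{−4/s}. -/

import Mathlib

open Complex Finset

/-- The dual group `Ĝ = G →* ℂˣ` of a finite abelian group is finite. -/
noncomputable instance instFintypeDual (G : Type*) [CommGroup G] [Fintype G] :
    Fintype (G →* ℂˣ) := by
  have : NeZero (Monoid.exponent G) := ⟨Monoid.exponent_ne_zero_of_finite⟩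
  have : Finite (G →* ℂˣ) := by
    obtain ⟨e⟩ := CommGroup.monoidHom_mulEquiv_of_hasEnoughRootsOfUnity G ℂ
    exact Finite.of_equiv G e.symm.toEquiv
  exact Fintype.ofFinite _

/-- The Fourier transform of `f : G → ℂ`, as a function on the dual group `G →* ℂˣ`:
`f̂(χ) = (1/|G|) ∑_{x ∈ G} f(x) conj(χ(x))`. -/
noncomputable def fourierT {G : Type*} [CommGroup G] [Fintype G] (f : G → ℂ) :
    (G →* ℂˣ) → ℂ :=
  fun χ => (Fintype.card G : ℂ)⁻¹ * ∑ x : G, f x * (starRingEnd ℂ) ((χ x : ℂ))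

/-- Normalized inner product `⟨u,w⟩ = (1/|α|) ∑ u(χ) conj(w(χ))`. -/
noncomputable def inn {α : Type*} [Fintype α] (u w : α → ℂ) : ℂ :=
  (Fintype.card α : ℂ)⁻¹ * ∑ χ : α, u χ * (starRingEnd ℂ) (w χ)

/-- Normalized convolution `(u∗w)(χ) = (1/|α|) ∑_ρ u(χρ⁻¹) w(ρ)`. -/
noncomputable def convol {α : Type*} [Group α] [Fintype α] (u w : α → ℂ) : α → ℂ :=
  fun χ => (Fintype.card α : ℂ)⁻¹ * ∑ ρ : α, u (χ * ρ⁻¹) * w ρ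

/-- The Rayleigh quotient `R_f(v) = |G| ⟨f̂ ∗ v, v⟩ / ⟨v, v⟩`. -/
noncomputable def Rq {G : Type*} [CommGroup G] [Fintype G] (f : G → ℂ)
    (v : (G →* ℂˣ) → ℂ) : ℂ :=
  (Fintype.card G : ℂ) * inn (convol (fourierT f) v) v / inn v v

/-- `nu f k` is the `k`-th largest value (1-indexed, with multiplicity) of the
real-valued function `f` on a finite type. -/
noncomputable def nu {G : Type*} [Fintype G] (f : G → ℝ) (k : ℕ) : ℝ :=
  ((Finset.univ.val.map f).sort (· ≤ ·)).getD (Fintype.card G - k) 0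

/-- `f` is positive definite: every Fourier coefficient is a nonnegative real number. -/
def PosDef {G : Type*} [CommGroup G] [Fintype G] (f : G → ℂ) : Prop :=
  ∀ χ : G →* ℂˣ, (fourierT f χ).im = 0 ∧ 0 ≤ (fourierT f χ).re

section AuxChars
open Real
variable {G : Type*} [CommGroup G] [Fintype G]

lemma char_norm_one (χ : G →* ℂˣ) (x : G) : ‖((χ x : ℂˣ) : ℂ)‖ = 1 := by
  refine norm_eq_one_of_pow_eq_one (n := Fintype.card G) ?_ Fintype.card_ne_zero
  rw [← Units.val_pow_eq_pow_val, ← map_pow, pow_card_eq_one, map_one, Units.val_one]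

lemma char_conj (χ : G →* ℂˣ) (x : G) :
    (starRingEnd ℂ) ((χ x : ℂ)) = ((χ x⁻¹ : ℂˣ) : ℂ) := by
  rw [← RCLike.inv_eq_conj (char_norm_one χ x), map_inv, ← Units.val_inv_eq_inv_val]

lemma card_dual : Fintype.card (G →* ℂˣ) = Fintype.card G := by
  have : NeZero (Monoid.exponent G) := ⟨Monoid.exponent_ne_zero_of_finite⟩
  obtain ⟨e⟩ := CommGroup.monoidHom_mulEquiv_of_hasEnoughRootsOfUnity G ℂ
  exact Fintype.card_congr e.toEquiv

open scoped Classical in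
lemma sum_char (x : G) :
    ∑ χ : G →* ℂˣ, ((χ x : ℂˣ) : ℂ) = if x = 1 then (Fintype.card G : ℂ) else 0 := by
  split_ifs with hx
  · subst hx
    simp only [map_one, Units.val_one]
    rw [Finset.sum_const, Finset.card_univ, card_dual, nsmul_eq_mul, mul_one]
  · have : NeZero (Monoid.exponent G) := ⟨Monoid.exponent_ne_zero_of_finite⟩
    obtain ⟨ψ, hψ⟩ := CommGroup.exists_apply_ne_one_of_hasEnoughRootsOfUnity G ℂ hx
    have hψ' : ((ψ x : ℂˣ) : ℂ) ≠ 1 := by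
      intro h
      exact hψ (Units.ext (by rw [h, Units.val_one]))
    refine eq_zero_of_mul_eq_self_left hψ' ?_
    calc ((ψ x : ℂˣ) : ℂ) * ∑ χ : G →* ℂˣ, ((χ x : ℂˣ) : ℂ)
        = ∑ χ : G →* ℂˣ, (((ψ * χ) x : ℂˣ) : ℂ) := by
          rw [Finset.mul_sum]; exact Finset.sum_congr rfl fun χ _ => by simp
      _ = ∑ χ : G →* ℂˣ, ((χ x : ℂˣ) : ℂ) :=
          Fintype.sum_bijective _ (Group.mulLeft_bijective ψ) _ _ (fun χ => rfl)

open scoped Classical in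
lemma inversion (f : G → ℂ) (x : G) :
    ∑ χ : G →* ℂˣ, fourierT f χ * ((χ x : ℂˣ) : ℂ) = f x := by
  simp only [fourierT, Finset.sum_mul, mul_assoc, ← Finset.mul_sum]
  rw [Finset.sum_comm]
  have key : ∀ y : G, ∑ χ : G →* ℂˣ, f y * ((starRingEnd ℂ) ((χ y : ℂ)) * ((χ x : ℂˣ) : ℂ))
      = f y * (if x * y⁻¹ = 1 then (Fintype.card G : ℂ) else 0) := by
    intro y
    rw [← Finset.mul_sum]
    congr 1
    rw [← sum_char (x * y⁻¹)]
    refine Finset.sum_congr rfl fun χ _ => ?_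
    rw [char_conj, mul_comm, ← Units.val_mul, ← map_mul]
  simp only [key]
  have key2 : ∀ y : G, f y * (if x * y⁻¹ = 1 then (Fintype.card G : ℂ) else 0)
      = if y = x then f y * (Fintype.card G : ℂ) else 0 := by
    intro y
    simp only [mul_inv_eq_one]
    by_cases h : x = y
    · subst h; simp
    · rw [if_neg h, if_neg (fun e => h e.symm), mul_zero]
  simp only [key2, Finset.sum_ite_eq' Finset.univ x, Finset.mem_univ, if_true]
  rw [mul_comm (f x), ← mul_assoc, inv_mul_cancel₀ (Nat.cast_ne_zero.mpr Fintype.card_ne_zero), one_mul]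

-- chord bound
lemma exp_I_sub_one_bound (t : ℝ) : ‖Complex.exp ((t : ℂ) * I) - 1‖ ≤ 2 * |t| := by
  have hnorm : ‖Complex.exp ((t : ℂ) * I)‖ = 1 := by
    simpa using Complex.abs_exp_ofReal_mul_I t
  have habs : ‖(t : ℂ) * I‖ = |t| := by
    simp
  by_cases hab : |t| ≤ 1
  · have := Complex.norm_exp_sub_one_le (x := (t : ℂ) * I) (by rw [habs]; exact hab)
    rw [habs] at this
    exact this
  · push_neg at hab
    calc ‖Complex.exp ((t : ℂ) * I) - 1‖
        ≤ ‖Complex.exp ((t : ℂ) * I)‖ + ‖(1 : ℂ)‖ := norm_sub_le _ _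
      _ = 2 := by rw [hnorm]; norm_num
      _ ≤ 2 * |t| := by nlinarith

lemma chord_bound (a b : ℝ) : ‖Complex.exp (a * I) - Complex.exp (b * I)‖ ≤ 2 * |a - b| := by
  have h1 : Complex.exp (a * I) - Complex.exp (b * I)
      = Complex.exp (b * I) * (Complex.exp (((a - b : ℝ) : ℂ) * I) - 1) := by
    rw [mul_sub, mul_one, ← Complex.exp_add]
    push_cast
    ring_nf
  rw [h1, norm_mul]
  have h2 : ‖Complex.exp ((b : ℂ) * I)‖ = 1 := by
    simpa using Complex.abs_exp_ofReal_mul_I b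
  rw [h2, one_mul]
  exact exp_I_sub_one_bound (a - b)

lemma one_sub_re_eq (u : ℂ) (hu : ‖u‖ = 1) : 1 - u.re = ‖u - 1‖^2 / 2 := by
  have h2 : ‖u - 1‖^2 = Complex.normSq (u - 1) := by
    rw [Complex.sq_norm]
  have h1 : u.re * u.re + u.im * u.im = 1 := by
    have := Complex.sq_norm u
    rw [hu] at this
    simpa [Complex.normSq_apply] using this.symm
  rw [h2, Complex.normSq_sub]
  simp only [map_one, mul_one, Complex.normSq_one, Complex.normSq_apply, h1]
  ring

open scoped Classical in
lemma exists_good_z (P : Finset (G →* ℂˣ)) (N : ℕ) (hN : 1 ≤ N)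
    (hcard : (∏ χ ∈ P, if χ ^ 2 = 1 then 2 else (N + 1)) < Fintype.card G) :
    ∃ z : G, z ≠ 1 ∧ ∀ χ ∈ P, (1 : ℝ) - ((χ z : ℂˣ) : ℂ).re ≤ 8 * π ^ 2 / N ^ 2 := by
  set F : G → (↥P → ℤ) := fun x χ =>
    if (χ : G →* ℂˣ) ^ 2 = 1 then (if (χ : G →* ℂˣ) x = 1 then 0 else 1)
    else ⌊(Complex.arg (((χ : G →* ℂˣ) x : ℂˣ) : ℂ) + π) * N / (2 * π)⌋ with hF
  set B : Finset (↥P → ℤ) :=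
    Fintype.piFinset (fun χ => if (χ : G →* ℂˣ) ^ 2 = 1 then ({0, 1} : Finset ℤ)
      else Finset.Icc 0 (N : ℤ)) with hB
  have hBcard : B.card = ∏ χ ∈ P, if χ ^ 2 = 1 then 2 else (N + 1) := by
    rw [hB, Fintype.card_piFinset]
    rw [← Finset.prod_attach P (fun χ => if χ ^ 2 = 1 then 2 else (N + 1))]
    refine Finset.prod_congr rfl fun χ _ => ?_
    by_cases h : (χ : G →* ℂˣ) ^ 2 = 1 <;> simp [h]
  have hmaps : ∀ x ∈ Finset.univ (α := G), F x ∈ B := by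
    intro x _
    rw [hB, Fintype.mem_piFinset]
    intro χ
    by_cases h : (χ : G →* ℂˣ) ^ 2 = 1
    · simp only [hF, h, if_true]
      by_cases h2 : (χ : G →* ℂˣ) x = 1 <;> simp [h2]
    · simp only [hF, h, if_false, Finset.mem_Icc]
      have hpi : (0 : ℝ) < π := Real.pi_pos
      have harg1 : -π < Complex.arg (((χ : G →* ℂˣ) x : ℂˣ) : ℂ) := Complex.neg_pi_lt_arg _
      have harg2 : Complex.arg (((χ : G →* ℂˣ) x : ℂˣ) : ℂ) ≤ π := Complex.arg_le_pi _
      constructor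
      · refine Int.floor_nonneg.mpr ?_
        apply div_nonneg (mul_nonneg (by linarith) (Nat.cast_nonneg N)) (by positivity)
      · have hle : (Complex.arg (((χ : G →* ℂˣ) x : ℂˣ) : ℂ) + π) * N / (2 * π) ≤ N := by
          have hN' : (1 : ℝ) ≤ N := by exact_mod_cast hN
          rw [div_le_iff₀ (by positivity)]
          nlinarith
        calc ⌊(Complex.arg (((χ : G →* ℂˣ) x : ℂˣ) : ℂ) + π) * N / (2 * π)⌋
            ≤ ⌊(N : ℝ)⌋ := Int.floor_le_floor hle
          _ = N := Int.floor_natCast N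
  obtain ⟨x, -, y, -, hxy, hFxy⟩ :=
    Finset.exists_ne_map_eq_of_card_lt_of_maps_to (by rwa [Finset.card_univ, hBcard]) hmaps
  refine ⟨x * y⁻¹, by simpa [mul_inv_eq_one] using hxy, ?_⟩
  intro χ hχ
  have hcoord := congrFun hFxy ⟨χ, hχ⟩
  have hval : ((χ (x * y⁻¹) : ℂˣ) : ℂ) = ((χ x : ℂˣ) : ℂ) * (((χ y : ℂˣ) : ℂ))⁻¹ := by
    rw [map_mul, map_inv, Units.val_mul, ← Units.val_inv_eq_inv_val]
  have hRHS : (0:ℝ) ≤ 8 * π ^ 2 / N ^ 2 := by positivity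
  have hz1 : ‖((χ (x * y⁻¹) : ℂˣ) : ℂ)‖ = 1 := char_norm_one χ _
  by_cases h : χ ^ 2 = 1
  · -- order 2 case: χ x = χ y
    simp only [hF, h, if_true] at hcoord
    have hpm : ∀ w : G, ((χ w : ℂˣ) : ℂ) = 1 ∨ ((χ w : ℂˣ) : ℂ) = -1 := by
      intro w
      have hu2 : (χ w) ^ 2 = 1 := by
        rw [← MonoidHom.pow_apply, h, MonoidHom.one_apply]
      have hx2 : ((χ w : ℂˣ) : ℂ) ^ 2 = 1 := by
        rw [← Units.val_pow_eq_pow_val, hu2, Units.val_one]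
      exact sq_eq_one_iff.mp hx2
    have hxyeq : ((χ x : ℂˣ) : ℂ) = ((χ y : ℂˣ) : ℂ) := by
      by_cases hx1 : χ x = 1
      · simp only [hx1, if_true] at hcoord
        by_cases hy1 : χ y = 1
        · rw [hx1, hy1]
        · simp only [hy1, if_false] at hcoord; exact absurd hcoord (by norm_num)
      · simp only [hx1, if_false] at hcoord
        by_cases hy1 : χ y = 1
        · simp only [hy1, if_true] at hcoord; exact absurd hcoord (by norm_num)
        · have hx1' : ((χ x : ℂˣ) : ℂ) ≠ 1 := fun e => hx1 (Units.ext (by rw [e, Units.val_one]))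
          have hy1' : ((χ y : ℂˣ) : ℂ) ≠ 1 := fun e => hy1 (Units.ext (by rw [e, Units.val_one]))
          rw [(hpm x).resolve_left hx1', (hpm y).resolve_left hy1']
    have : ((χ (x * y⁻¹) : ℂˣ) : ℂ) = 1 := by
      rw [hval, hxyeq]
      exact mul_inv_cancel₀ (by
        intro e
        have := hpm y
        rcases this with h1 | h1 <;> rw [h1] at e <;> norm_num at e)
    rw [this]
    simpa using hRHS
  · -- generic case
    simp only [hF, h, if_false] at hcoord
    set a := Complex.arg ((χ x : ℂˣ) : ℂ) with ha
    set b := Complex.arg ((χ y : ℂˣ) : ℂ) with hb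
    have hpi : (0 : ℝ) < π := Real.pi_pos
    have hNpos : (0 : ℝ) < N := by exact_mod_cast hN
    have hfl : |((a + π) * N / (2 * π)) - ((b + π) * N / (2 * π))| < 1 :=
      Int.abs_sub_lt_one_of_floor_eq_floor hcoord
    have hargs : |a - b| < 2 * π / N := by
      have heq : ((a + π) * N / (2 * π)) - ((b + π) * N / (2 * π)) = (a - b) * N / (2 * π) := by
        ring
      rw [heq, abs_div, abs_mul] at hfl
      rw [abs_of_pos (by positivity : (0:ℝ) < 2 * π), abs_of_pos hNpos] at hfl
      rw [div_lt_iff₀ (by positivity)] at hfl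
      rw [lt_div_iff₀ hNpos]
      nlinarith
    have hux : ((χ x : ℂˣ) : ℂ) = Complex.exp ((a : ℂ) * I) := by
      have h1 := Complex.norm_mul_exp_arg_mul_I ((χ x : ℂˣ) : ℂ)
      have h2 : ‖((χ x : ℂˣ) : ℂ)‖ = 1 := by
        exact char_norm_one χ x
      rw [h2] at h1
      rw [← h1]; push_cast; rw [one_mul]
    have huy : ((χ y : ℂˣ) : ℂ) = Complex.exp ((b : ℂ) * I) := by
      have h1 := Complex.norm_mul_exp_arg_mul_I ((χ y : ℂˣ) : ℂ)
      have h2 : ‖((χ y : ℂˣ) : ℂ)‖ = 1 := by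
        exact char_norm_one χ y
      rw [h2] at h1
      rw [← h1]; push_cast; rw [one_mul]
    have hvy : ‖((χ y : ℂˣ) : ℂ)⁻¹‖ = 1 := by
      rw [norm_inv, char_norm_one, inv_one]
    have hsub : ‖((χ (x * y⁻¹) : ℂˣ) : ℂ) - 1‖ ≤ 4 * π / N := by
      have hfac : ((χ (x * y⁻¹) : ℂˣ) : ℂ) - 1
          = (((χ x : ℂˣ) : ℂ) - ((χ y : ℂˣ) : ℂ)) * (((χ y : ℂˣ) : ℂ))⁻¹ := by
        rw [hval]
        have hy0 : ((χ y : ℂˣ) : ℂ) ≠ 0 := Units.ne_zero _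
        field_simp
      rw [hfac, norm_mul, hvy, mul_one, hux, huy]
      calc ‖Complex.exp ((a : ℂ) * I) - Complex.exp ((b : ℂ) * I)‖
          ≤ 2 * |a - b| := chord_bound a b
        _ ≤ 2 * (2 * π / N) := by linarith
        _ = 4 * π / N := by ring
    have hkey := one_sub_re_eq _ hz1
    rw [hkey]
    have h0 : (0 : ℝ) ≤ ‖((χ (x * y⁻¹) : ℂˣ) : ℂ) - 1‖ := norm_nonneg _
    calc ‖((χ (x * y⁻¹) : ℂˣ) : ℂ) - 1‖ ^ 2 / 2 ≤ (4 * π / N) ^ 2 / 2 := by nlinarith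
      _ = 8 * π ^ 2 / N ^ 2 := by field_simp; ring

lemma conj_char_inv (χ : G →* ℂˣ) (x : G) :
    (starRingEnd ℂ) (((χ⁻¹ : G →* ℂˣ) x : ℂˣ) : ℂ) = ((χ x : ℂˣ) : ℂ) := by
  have h1 : ((χ⁻¹ : G →* ℂˣ) x : ℂˣ) = (χ x)⁻¹ := rfl
  rw [h1, Units.val_inv_eq_inv_val]
  have h2 : ‖(((χ x : ℂˣ) : ℂ))⁻¹‖ = 1 := by
    rw [norm_inv, char_norm_one, inv_one]
  rw [← RCLike.inv_eq_conj h2, inv_inv]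

lemma re_char_inv (χ : G →* ℂˣ) (x : G) :
    (((χ⁻¹ : G →* ℂˣ) x : ℂˣ) : ℂ).re = ((χ x : ℂˣ) : ℂ).re := by
  conv_rhs => rw [← conj_char_inv χ x]
  rw [Complex.conj_re]


end AuxChars

lemma sorted_getD_ge (l : List ℝ) (hl : l.Pairwise (· ≤ ·)) (k : ℕ) (c : ℝ)
    (hk : 1 ≤ k) (hkn : k ≤ l.length)
    (hcount : k ≤ l.countP (fun x => decide (c ≤ x))) :
    c ≤ l.getD (l.length - k) 0 := by
  by_contra hlt
  push_neg at hlt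
  set i := l.length - k with hi
  have hin : i < l.length := by omega
  rw [List.getD_eq_getElem?_getD, List.getElem?_eq_getElem hin] at hlt
  simp only [Option.getD_some] at hlt
  have hsplit := List.take_append_drop (i+1) l
  have hcount2 : l.countP (fun x => decide (c ≤ x)) =
      (l.take (i+1)).countP (fun x => decide (c ≤ x)) +
      (l.drop (i+1)).countP (fun x => decide (c ≤ x)) := by
    conv_lhs => rw [← hsplit]
    rw [List.countP_append]
  have htake : (l.take (i+1)).countP (fun x => decide (c ≤ x)) = 0 := by
    rw [List.countP_eq_zero]
    intro a ha
    obtain ⟨j, hj, rfl⟩ := List.mem_take_iff_getElem.mp ha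
    have hji : j ≤ i := by omega
    have hjn : j < l.length := by omega
    have := hl.rel_get_of_le (a := ⟨j, hjn⟩) (b := ⟨i, hin⟩) hji
    simp only [List.get_eq_getElem] at this
    simp only [decide_eq_true_eq]
    push_neg
    calc l[j] ≤ l[i] := this
    _ < c := hlt
  have hdrop : (l.drop (i+1)).countP (fun x => decide (c ≤ x)) ≤ k - 1 := by
    calc (l.drop (i+1)).countP _ ≤ (l.drop (i+1)).length := List.countP_le_length
    _ = l.length - (i+1) := List.length_drop
    _ ≤ k - 1 := by omega
  omega

lemma nu_ge {G : Type*} [Fintype G] (f : G → ℝ) (k : ℕ) (c : ℝ)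
    (hk : 1 ≤ k) (hkn : k ≤ Fintype.card G)
    (hcount : k ≤ (Finset.univ.filter (fun x => c ≤ f x)).card) :
    c ≤ nu f k := by
  classical
  set m : Multiset ℝ := Finset.univ.val.map f with hm
  have hlen : (m.sort (· ≤ ·)).length = Fintype.card G := by
    rw [Multiset.length_sort, Multiset.card_map]; rfl
  have hcnt : (m.sort (· ≤ ·)).countP (fun x => decide (c ≤ x)) =
      (Finset.univ.filter (fun x => c ≤ f x)).card := by
    have : ((m.sort (· ≤ ·) : List ℝ) : Multiset ℝ) = m := Multiset.sort_eq _ _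
    rw [← Multiset.coe_countP, this, hm, Multiset.countP_map]
    rfl
  rw [nu, ← hlen]
  refine sorted_getD_ge _ (Multiset.pairwise_sort _ _) k c hk (by rw [hlen]; exact hkn)
    (by rw [hcnt]; exact hcount)

lemma nu_mem {G : Type*} [Fintype G] (f : G → ℝ) (k : ℕ) (hk : 1 ≤ k) (hG : Nonempty G) :
    ∃ x : G, nu f k = f x := by
  classical
  set m : Multiset ℝ := Finset.univ.val.map f with hm
  have hlen : (m.sort (· ≤ ·)).length = Fintype.card G := by
    rw [Multiset.length_sort, Multiset.card_map]; rfl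
  have hcard : 0 < Fintype.card G := Fintype.card_pos
  have hin : Fintype.card G - k < (m.sort (· ≤ ·)).length := by omega
  have hmem : (m.sort (· ≤ ·)).getD (Fintype.card G - k) 0 ∈ m.sort (· ≤ ·) := by
    rw [List.getD_eq_getElem?_getD, List.getElem?_eq_getElem hin]
    exact List.getElem_mem _
  rw [← Multiset.mem_coe, Multiset.sort_eq, hm, Multiset.mem_map] at hmem
  obtain ⟨x, _, hx⟩ := hmem
  exact ⟨x, hx.symm⟩

section AuxArith
open Real

lemma arith_small (s n : ℕ) (hs : 1 ≤ s) (hn1 : 1 ≤ n) (hn : n < 16 ^ (s + 1)) :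
    (2 : ℝ) ≤ 2 ^ 40 * (n : ℝ) ^ (-(4 : ℝ) / s) := by
  have hs' : (1 : ℝ) ≤ s := by exact_mod_cast hs
  have hn' : (1 : ℝ) ≤ n := by exact_mod_cast hn1
  have hnn : (0 : ℝ) < n := by linarith
  have h1 : (n : ℝ) ^ ((4 : ℝ) / s) ≤ 2 ^ 32 := by
    have hle : (n : ℝ) ≤ (16 : ℝ) ^ (s + 1) := by
      have : (n : ℝ) ≤ ((16 ^ (s + 1) : ℕ) : ℝ) := by exact_mod_cast hn.le
      simpa using this
    have h2 : (n : ℝ) ^ ((4 : ℝ) / s) ≤ ((16 : ℝ) ^ (s + 1)) ^ ((4 : ℝ) / s) :=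
      Real.rpow_le_rpow (by positivity) hle (by positivity)
    refine h2.trans ?_
    rw [← Real.rpow_natCast (16 : ℝ) (s + 1), ← Real.rpow_mul (by norm_num)]
    have hexp : ((s + 1 : ℕ) : ℝ) * ((4 : ℝ) / s) ≤ 8 := by
      push_cast
      rw [← mul_div_assoc]
      rw [div_le_iff₀ (by linarith)]
      nlinarith
    calc (16 : ℝ) ^ (((s + 1 : ℕ) : ℝ) * ((4 : ℝ) / s))
        ≤ (16 : ℝ) ^ (8 : ℝ) := Real.rpow_le_rpow_of_exponent_le (by norm_num) hexp
      _ = 2 ^ 32 := by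
        rw [show (8:ℝ) = ((8:ℕ):ℝ) by norm_num, Real.rpow_natCast]
        norm_num
  have hpos : (0 : ℝ) < (n : ℝ) ^ ((4 : ℝ) / s) := Real.rpow_pos_of_pos hnn _
  rw [neg_div, Real.rpow_neg hnn.le]
  have hinv : ((2 : ℝ) ^ 32)⁻¹ ≤ ((n : ℝ) ^ ((4 : ℝ) / s))⁻¹ := by
    apply inv_anti₀ hpos h1
  nlinarith

set_option maxHeartbeats 1000000 in
lemma arith_main (s d r n : ℕ) (hs : 1 ≤ s) (hd : 1 ≤ d) (hrd : r + 2 * d ≤ s)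
    (hn : 16 ^ (s + 1) ≤ n) :
    ∃ N : ℕ, 1 ≤ N ∧ 2 ^ r * (N + 1) ^ d < n ∧
      8 * Real.pi ^ 2 / (N : ℝ) ^ 2 ≤ 2 ^ 40 * (n : ℝ) ^ (-(4 : ℝ) / s) := by
  have hs' : (1 : ℝ) ≤ s := by exact_mod_cast hs
  have hd' : (1 : ℝ) ≤ d := by exact_mod_cast hd
  have hd0 : (d : ℝ) ≠ 0 := by positivity
  have hnR : ((16 : ℝ)) ^ (s + 1) ≤ (n : ℝ) := by exact_mod_cast hn
  have hnpos : (0 : ℝ) < n := lt_of_lt_of_le (by positivity) hnR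
  set β : ℝ := (n : ℝ) / 4 ^ (s + 1) with hβdef
  have hβpos : 0 < β := by positivity
  have hβ : (4 : ℝ) ^ (s + 1) ≤ β := by
    rw [hβdef, le_div_iff₀ (by positivity)]
    calc (4:ℝ) ^ (s+1) * 4 ^ (s+1) = (4*4 : ℝ) ^ (s+1) := by rw [mul_pow]
      _ = (16:ℝ) ^ (s+1) := by norm_num
      _ ≤ n := hnR
  have hβ1 : (1 : ℝ) ≤ β := le_trans (one_le_pow₀ (by norm_num)) hβ
  set γ : ℝ := β ^ ((d : ℝ)⁻¹) with hγdef
  have hγpos : 0 < γ := Real.rpow_pos_of_pos hβpos _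
  have hγ4 : (4 : ℝ) ≤ γ := by
    have h4d : (4 : ℝ) ^ d ≤ β := by
      refine le_trans ?_ hβ
      apply pow_le_pow_right₀ (by norm_num)
      omega
    have := Real.rpow_le_rpow (by positivity) h4d (by positivity : (0:ℝ) ≤ (d:ℝ)⁻¹)
    rwa [← Real.rpow_natCast (4:ℝ) d, ← Real.rpow_mul (by norm_num),
      mul_inv_cancel₀ hd0, Real.rpow_one] at this
  set N : ℕ := ⌊γ⌋₊ with hNdef
  have hN4 : 4 ≤ N := Nat.le_floor (by exact_mod_cast hγ4)
  have hNγ : (N : ℝ) ≤ γ := Nat.floor_le hγpos.le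
  have hγN : γ ≤ (N : ℝ) + 1 := (Nat.lt_floor_add_one γ).le
  have hγd : γ ^ d = β := Real.rpow_inv_natCast_pow hβpos.le (by omega)
  refine ⟨N, by omega, ?_, ?_⟩
  · -- counting bound
    have hreal : (2 : ℝ) ^ r * ((N : ℝ) + 1) ^ d < n := by
      have h51 : (N : ℝ) + 1 ≤ (5/4) * γ := by nlinarith
      have h52 : ((N : ℝ) + 1) ^ d ≤ ((5/4) * γ) ^ d := by
        apply pow_le_pow_left₀ (by positivity) h51
      have h53 : ((5/4 : ℝ) * γ) ^ d = (5/4) ^ d * β := by rw [mul_pow, hγd]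
      have h54 : ((5/4 : ℝ)) ^ d ≤ 2 ^ d := by
        apply pow_le_pow_left₀ (by norm_num) (by norm_num)
      have h55 : (2:ℝ) ^ r * (2 ^ d * β) ≤ 2 ^ s * β := by
        rw [← mul_assoc, ← pow_add]
        have : (2:ℝ) ^ (r + d) ≤ 2 ^ s := by
          apply pow_le_pow_right₀ (by norm_num)
          omega
        nlinarith
      have h56 : (2:ℝ) ^ s * β ≤ (n : ℝ) / 4 := by
        rw [hβdef, ← mul_div_assoc]
        rw [div_le_div_iff₀ (by positivity) (by norm_num)]
        have h2s : (2:ℝ)^s * 4 ≤ 4 ^ (s+1) := by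
          have : (2:ℝ)^s ≤ 4^s := by
            apply pow_le_pow_left₀ (by norm_num) (by norm_num)
          calc (2:ℝ)^s * 4 ≤ 4^s * 4 := by nlinarith
            _ = 4^(s+1) := by ring
        nlinarith
      have hn4 : (n:ℝ)/4 < n := by nlinarith
      calc (2:ℝ)^r * ((N:ℝ)+1)^d ≤ 2^r * ((5/4)^d * β) := by
            rw [← h53]; exact mul_le_mul_of_nonneg_left h52 (by positivity)
        _ ≤ 2^r * (2^d * β) := by
            apply mul_le_mul_of_nonneg_left _ (by positivity : (0:ℝ) ≤ 2^r)
            exact mul_le_mul_of_nonneg_right h54 hβpos.le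
        _ ≤ 2^s * β := h55
        _ ≤ (n:ℝ)/4 := h56
        _ < n := hn4
    have : ((2 ^ r * (N + 1) ^ d : ℕ) : ℝ) < (n : ℝ) := by push_cast; exact hreal
    exact_mod_cast this
  · -- analytic bound
    have hNlow : (n : ℝ) ^ ((2:ℝ)/s) / 512 ≤ (N : ℝ) := by
      have h1 : γ - 1 ≤ N := by linarith
      have h2 : (3/4 : ℝ) * γ ≤ γ - 1 := by linarith
      have h3 : β ^ ((2:ℝ)/s) ≤ γ := by
        rw [hγdef]
        apply Real.rpow_le_rpow_of_exponent_le hβ1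
        rw [inv_eq_one_div, div_le_div_iff₀ (by linarith) (by linarith)]
        have h2d : 2 * d ≤ s := by omega
        have : (2:ℝ) * d ≤ s := by exact_mod_cast h2d
        linarith
      have h4 : (n : ℝ) ^ ((2:ℝ)/s) / 256 ≤ β ^ ((2:ℝ)/s) := by
        have hdiv : β ^ ((2:ℝ)/s) = (n:ℝ) ^ ((2:ℝ)/s) / ((4:ℝ) ^ (s+1)) ^ ((2:ℝ)/s) := by
          rw [hβdef, Real.div_rpow (by positivity) (by positivity)]
        have hden : ((4:ℝ) ^ (s+1)) ^ ((2:ℝ)/s) ≤ 256 := by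
          rw [← Real.rpow_natCast (4:ℝ) (s+1), ← Real.rpow_mul (by norm_num)]
          have hexp : ((s + 1 : ℕ) : ℝ) * ((2 : ℝ) / s) ≤ 4 := by
            push_cast
            rw [← mul_div_assoc, div_le_iff₀ (by linarith)]
            nlinarith
          calc (4:ℝ) ^ (((s+1:ℕ):ℝ) * ((2:ℝ)/s)) ≤ (4:ℝ) ^ (4:ℝ) :=
                Real.rpow_le_rpow_of_exponent_le (by norm_num) hexp
            _ = 256 := by
                rw [show (4:ℝ) = ((4:ℕ):ℝ) from by norm_num]
                rw [Real.rpow_natCast]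
                norm_num
        rw [hdiv]
        apply div_le_div_of_nonneg_left (by positivity) (by positivity) hden
      have hnp : (0:ℝ) < (n : ℝ) ^ ((2:ℝ)/s) := Real.rpow_pos_of_pos hnpos _
      have : (n : ℝ) ^ ((2:ℝ)/s) / 512 ≤ (3/4 : ℝ) * ((n : ℝ) ^ ((2:ℝ)/s) / 256) := by
        linarith
      have h5 : (3/4 : ℝ) * ((n : ℝ) ^ ((2:ℝ)/s) / 256) ≤ (3/4 : ℝ) * γ := by
        linarith
      linarith
    -- final analytic chain
    have hnp : (0:ℝ) < (n : ℝ) ^ ((2:ℝ)/s) := Real.rpow_pos_of_pos hnpos _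
    have hN0 : (0:ℝ) < N := by
      have : (4:ℝ) ≤ N := by exact_mod_cast hN4
      linarith
    have hid : ((n : ℝ) ^ ((2:ℝ)/s)) ^ 2 = (n : ℝ) ^ ((4:ℝ)/s) := by
      rw [← Real.rpow_natCast ((n : ℝ) ^ ((2:ℝ)/s)) 2, ← Real.rpow_mul hnpos.le]
      norm_num
      rw [div_mul_eq_mul_div]
      norm_num
    have hsq : ((n : ℝ) ^ ((2:ℝ)/s) / 512) ^ 2 ≤ ((N : ℝ)) ^ 2 :=
      pow_le_pow_left₀ (by positivity) hNlow 2
    have hc1 : 8 * Real.pi ^ 2 / (N:ℝ)^2 ≤ 8 * Real.pi ^ 2 / ((n : ℝ) ^ ((2:ℝ)/s) / 512) ^ 2 :=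
      div_le_div_of_nonneg_left (by positivity) (by positivity) hsq
    have hc2 : 8 * Real.pi ^ 2 / ((n : ℝ) ^ ((2:ℝ)/s) / 512) ^ 2
        = 8 * Real.pi ^ 2 * 512 ^ 2 / (n : ℝ) ^ ((4:ℝ)/s) := by
      rw [div_pow, hid, div_div_eq_mul_div]
    have hc3 : 8 * Real.pi ^ 2 * 512 ^ 2 / (n : ℝ) ^ ((4:ℝ)/s)
        ≤ 2 ^ 40 / (n : ℝ) ^ ((4:ℝ)/s) := by
      gcongr
      nlinarith [Real.pi_le_four, Real.pi_pos]

    have hc4 : (2:ℝ) ^ 40 / (n : ℝ) ^ ((4:ℝ)/s) = 2 ^ 40 * (n : ℝ) ^ (-(4:ℝ)/s) := by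
      rw [neg_div, Real.rpow_neg hnpos.le, div_eq_mul_inv]
    linarith [hc1, hc2 ▸ hc1, hc3]

end AuxArith

set_option maxHeartbeats 2000000 in
/-- for each `s ≥ 1` there is `K > 0` such that for every finite abelian
group `G` and every nonzero real-valued positive definite `f : G → ℝ` with
`|supp(f̂)| ≤ s` whose Fourier support contains a character `χ` with `χ² ≠ 1`:
`ν₁(f) − ν₂(f) ≤ K ν₁(f) |G|^{−4/s}`. -/
theorem stmt_10 (s : ℕ) (hs : 0 < s) :
    ∃ K : ℝ, 0 < K ∧
      ∀ (G : Type*) [CommGroup G] [Fintype G] (f : G → ℝ),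
        f ≠ 0 →
        PosDef (fun x => (f x : ℂ)) →
        (Function.support (fourierT (fun x => (f x : ℂ)))).ncard ≤ s →
        (∃ χ ∈ Function.support (fourierT (fun x => (f x : ℂ))), χ ^ 2 ≠ 1) →
        nu f 1 - nu f 2 ≤ K * nu f 1 * (Fintype.card G : ℝ) ^ (-(4 : ℝ) / s) := by
  classical
  refine ⟨2 ^ 40, by positivity, ?_⟩
  intro G _ _ f hf0 hpd hsupp hchi
  set n := Fintype.card G with hn
  have hn1 : 1 ≤ n := Fintype.card_pos
  set fc : G → ℂ := fun x => (f x : ℂ) with hfc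
  set a : (G →* ℂˣ) → ℝ := fun χ => (fourierT fc χ).re with hadef
  have ha0 : ∀ χ, 0 ≤ a χ := fun χ => (hpd χ).2
  have hfT : ∀ χ, fourierT fc χ = ((a χ : ℝ) : ℂ) := fun χ => by
    apply Complex.ext
    · rw [Complex.ofReal_re]
    · rw [(hpd χ).1, Complex.ofReal_im]
  have hinv : ∀ x : G, f x = ∑ χ : G →* ℂˣ, a χ * ((χ x : ℂˣ) : ℂ).re := by
    intro x
    have h2 := congrArg Complex.re (inversion fc x)
    rw [Complex.re_sum] at h2
    have hterm : ∀ χ : G →* ℂˣ, (fourierT fc χ * ((χ x : ℂˣ) : ℂ)).re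
        = a χ * ((χ x : ℂˣ) : ℂ).re := fun χ => by
      rw [hfT χ, Complex.mul_re, Complex.ofReal_re, Complex.ofReal_im, zero_mul, sub_zero]
    rw [Finset.sum_congr rfl (fun χ _ => hterm χ)] at h2
    have hre : (fc x).re = f x := Complex.ofReal_re _
    rw [hre] at h2
    exact h2.symm
  set S : Finset (G →* ℂˣ) := Finset.univ.filter (fun χ => fourierT fc χ ≠ 0) with hSdef
  have hSset : Function.support (fourierT fc) = ↑S := by
    ext χ; simp [hSdef, Function.mem_support]
  have hScard : S.card ≤ s := by
    rw [← Set.ncard_coe_finset, ← hSset]; exact hsupp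
  have haS : ∀ χ, χ ∉ S → a χ = 0 := by
    intro χ hχ
    have h0 : fourierT fc χ = 0 := by
      by_contra h
      exact hχ (by simp [hSdef, h])
    rw [hadef]; simp only [h0, Complex.zero_re]
  have hconjfc : ∀ x : G, (starRingEnd ℂ) (fc x) = fc x := by
    intro x; rw [hfc]; exact Complex.conj_ofReal _
  have hconj : ∀ χ : G →* ℂˣ, fourierT fc χ⁻¹ = (starRingEnd ℂ) (fourierT fc χ) := by
    intro χ
    rw [fourierT, fourierT, map_mul, map_sum]
    congr 1
    · simp
    · refine Finset.sum_congr rfl fun x _ => ?_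
      rw [map_mul, Complex.conj_conj, hconjfc x, conj_char_inv]
  have hSinv : ∀ χ, χ ∈ S → χ⁻¹ ∈ S := by
    intro χ hχ
    have h1 : fourierT fc χ ≠ 0 := by
      simpa [hSdef] using hχ
    have : fourierT fc χ⁻¹ ≠ 0 := by
      rw [hconj]
      simpa using h1
    simp [hSdef, this]
  have huniv1 : f 1 = ∑ χ : G →* ℂˣ, a χ := by
    have := hinv 1
    simpa using this
  have hf1 : f 1 = ∑ χ ∈ S, a χ := by
    rw [huniv1]
    exact (Finset.sum_subset (Finset.subset_univ S) (fun χ _ hχ => haS χ hχ)).symm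
  have hre_le : ∀ (χ : G →* ℂˣ) (x : G), |((χ x : ℂˣ) : ℂ).re| ≤ 1 := by
    intro χ x
    calc |((χ x : ℂˣ) : ℂ).re| ≤ ‖((χ x : ℂˣ) : ℂ)‖ := Complex.abs_re_le_norm _
      _ = 1 := by exact char_norm_one χ x
  have habs : ∀ x : G, |f x| ≤ f 1 := by
    intro x
    rw [hinv x]
    calc |∑ χ : G →* ℂˣ, a χ * ((χ x : ℂˣ) : ℂ).re|
        ≤ ∑ χ : G →* ℂˣ, |a χ * ((χ x : ℂˣ) : ℂ).re| := Finset.abs_sum_le_sum_abs _ _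
      _ ≤ ∑ χ : G →* ℂˣ, a χ := by
          refine Finset.sum_le_sum fun χ _ => ?_
          rw [abs_mul, _root_.abs_of_nonneg (ha0 χ)]
          calc a χ * |((χ x : ℂˣ) : ℂ).re| ≤ a χ * 1 :=
                mul_le_mul_of_nonneg_left (hre_le χ x) (ha0 χ)
            _ = a χ := mul_one _
      _ = f 1 := huniv1.symm
  have hf1nn : 0 ≤ f 1 := by
    rw [huniv1]
    exact Finset.sum_nonneg fun χ _ => ha0 χ
  have hnu1 : nu f 1 = f 1 := by
    have hle : nu f 1 ≤ f 1 := by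
      obtain ⟨x, hx⟩ := nu_mem f 1 le_rfl inferInstance
      rw [hx]
      exact le_trans (le_abs_self _) (habs x)
    have hge : f 1 ≤ nu f 1 := by
      refine nu_ge f 1 (f 1) le_rfl hn1 ?_
      refine Finset.card_pos.mpr ⟨1, ?_⟩
      simp
    linarith
  by_cases hsmall : n < 16 ^ (s + 1)
  · -- small groups
    have h2 := arith_small s n hs hn1 hsmall
    obtain ⟨w, hw⟩ := nu_mem f 2 one_le_two inferInstance
    have hnu2 : -f 1 ≤ nu f 2 := by
      rw [hw]
      have := habs w
      have := neg_abs_le (f w)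
      linarith
    calc nu f 1 - nu f 2 ≤ 2 * f 1 := by rw [hnu1]; linarith
      _ ≤ (2 ^ 40 * (n : ℝ) ^ (-(4 : ℝ) / s)) * f 1 := mul_le_mul_of_nonneg_right h2 hf1nn
      _ = 2 ^ 40 * nu f 1 * (n : ℝ) ^ (-(4 : ℝ) / s) := by rw [hnu1]; ring
  · push_neg at hsmall
    obtain ⟨χ₀, hχ₀supp, hχ₀2⟩ := hchi
    have hχ₀S : χ₀ ∈ S := by
      rw [hSset] at hχ₀supp
      exact_mod_cast hχ₀supp
    set e := Fintype.equivFin (G →* ℂˣ) with hedef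
    set P : Finset (G →* ℂˣ) :=
      S.filter (fun χ => χ ^ 2 = 1 ∨ (e χ : ℕ) ≤ (e χ⁻¹ : ℕ)) with hPdef
    have hPS : P ⊆ S := Finset.filter_subset _ _
    set d := (P.filter (fun χ => ¬ χ ^ 2 = 1)).card with hddef
    set r := (P.filter (fun χ => χ ^ 2 = 1)).card with hrdef
    have hinv2 : ∀ χ : G →* ℂˣ, ¬ χ ^ 2 = 1 → ¬ (χ⁻¹) ^ 2 = 1 := by
      intro χ h hcon
      rw [inv_pow χ 2] at hcon
      exact h (inv_eq_one.mp hcon)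
    have hcover : ∀ χ ∈ S, χ ∈ P ∨ χ⁻¹ ∈ P := by
      intro χ hχ
      by_cases h2 : χ ^ 2 = 1
      · left; rw [hPdef]; exact Finset.mem_filter.mpr ⟨hχ, Or.inl h2⟩
      · rcases le_total ((e χ : ℕ)) ((e χ⁻¹ : ℕ)) with h | h
        · left; rw [hPdef]; exact Finset.mem_filter.mpr ⟨hχ, Or.inr h⟩
        · right; rw [hPdef]
          refine Finset.mem_filter.mpr ⟨hSinv χ hχ, Or.inr ?_⟩
          rwa [inv_inv χ]
    have hnoinv : ∀ χ ∈ P, ¬ χ ^ 2 = 1 → χ⁻¹ ∉ P := by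
      intro χ hχ h2 hcon
      have hA := (Finset.mem_filter.mp hχ).2
      have hB := (Finset.mem_filter.mp hcon).2
      rw [inv_inv χ] at hB
      have hA' : (e χ : ℕ) ≤ (e χ⁻¹ : ℕ) := hA.resolve_left h2
      have hB' : (e χ⁻¹ : ℕ) ≤ (e χ : ℕ) := hB.resolve_left (hinv2 χ h2)
      have : e χ = e χ⁻¹ := Fin.ext (le_antisymm hA' hB')
      have hχeq : χ = χ⁻¹ := e.injective this
      exact h2 (by rw [pow_two]; nth_rewrite 2 [hχeq]; exact mul_inv_cancel χ)
    have hd1 : 1 ≤ d := by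
      rw [hddef]
      refine Finset.card_pos.mpr ?_
      rcases hcover χ₀ hχ₀S with h | h
      · exact ⟨χ₀, Finset.mem_filter.mpr ⟨h, hχ₀2⟩⟩
      · exact ⟨χ₀⁻¹, Finset.mem_filter.mpr ⟨h, hinv2 χ₀ hχ₀2⟩⟩
    have hrds : r + 2 * d ≤ s := by
      set Q := (P.filter (fun χ => ¬ χ ^ 2 = 1)).image (fun χ => χ⁻¹) with hQdef
      have hQcard : Q.card = d := by
        rw [hQdef]
        exact Finset.card_image_of_injective _ (fun _ _ h => inv_injective h)
      have hQS : Q ⊆ S := by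
        intro χ hχ
        rw [hQdef] at hχ
        obtain ⟨ρ, hρ, rfl⟩ := Finset.mem_image.mp hχ
        exact hSinv ρ (hPS (Finset.mem_filter.mp hρ).1)
      have hdisj : Disjoint P Q := by
        rw [Finset.disjoint_right]
        intro χ hχQ hχP
        rw [hQdef] at hχQ
        obtain ⟨ρ, hρ, rfl⟩ := Finset.mem_image.mp hχQ
        have hρP := (Finset.mem_filter.mp hρ).1
        have hρ2 := (Finset.mem_filter.mp hρ).2
        exact hnoinv ρ hρP hρ2 hχP
      have hPcard : P.card = r + d := by
        rw [hrdef, hddef]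
        exact (Finset.card_filter_add_card_filter_not _).symm
      have hunion : (P ∪ Q).card = r + 2 * d := by
        rw [Finset.card_union_of_disjoint hdisj, hPcard, hQcard]
        ring
      calc r + 2 * d = (P ∪ Q).card := hunion.symm
        _ ≤ S.card := Finset.card_le_card (Finset.union_subset hPS hQS)
        _ ≤ s := hScard
    obtain ⟨N, hN1, hNcount, hNbound⟩ := arith_main s d r n hs hd1 hrds hsmall
    have hprodlt : (∏ χ ∈ P, if χ ^ 2 = 1 then 2 else (N + 1)) < Fintype.card G := by
      have hsplit : (∏ χ ∈ P, if χ ^ 2 = 1 then 2 else (N + 1))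
          = 2 ^ r * (N + 1) ^ d := by
        rw [Finset.prod_ite, Finset.prod_const, Finset.prod_const, hrdef, hddef]
      rw [hsplit, ← hn]
      exact hNcount
    obtain ⟨z, hz1, hzbound⟩ := exists_good_z P N hN1 hprodlt
    have hzS : ∀ χ ∈ S, 1 - ((χ z : ℂˣ) : ℂ).re ≤ 8 * Real.pi ^ 2 / N ^ 2 := by
      intro χ hχ
      rcases hcover χ hχ with h | h
      · exact hzbound χ h
      · have := hzbound χ⁻¹ h
        rwa [re_char_inv χ z] at this
    have hfz : f 1 - f z = ∑ χ ∈ S, a χ * (1 - ((χ z : ℂˣ) : ℂ).re) := by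
      have hz' : f z = ∑ χ ∈ S, a χ * ((χ z : ℂˣ) : ℂ).re := by
        rw [hinv z]
        refine (Finset.sum_subset (Finset.subset_univ S) (fun χ _ hχ => ?_)).symm
        rw [haS χ hχ, zero_mul]
      rw [hf1, hz', ← Finset.sum_sub_distrib]
      refine Finset.sum_congr rfl fun χ _ => ?_
      ring
    have hgap : f 1 - f z ≤ f 1 * (8 * Real.pi ^ 2 / N ^ 2) := by
      rw [hfz, hf1, Finset.sum_mul]
      refine Finset.sum_le_sum fun χ hχ => ?_
      exact mul_le_mul_of_nonneg_left (hzS χ hχ) (ha0 χ)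
    have hn2 : 2 ≤ n := by
      rw [hn]
      refine Fintype.one_lt_card_iff_nontrivial.mpr ⟨⟨z, 1, hz1⟩⟩
    have hnu2 : f z ≤ nu f 2 := by
      refine nu_ge f 2 (f z) (by norm_num) hn2 ?_
      have hsub : ({z, 1} : Finset G) ⊆ Finset.univ.filter (fun x => f z ≤ f x) := by
        intro x hx
        rcases Finset.mem_insert.mp hx with rfl | hx1
        · simp
        · rw [Finset.mem_singleton] at hx1
          subst hx1
          simp only [Finset.mem_filter, Finset.mem_univ, true_and]
          exact le_trans (le_abs_self _) (habs z)
      calc 2 = ({z, 1} : Finset G).card := by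
            rw [Finset.card_insert_of_notMem (by simpa using hz1), Finset.card_singleton]
        _ ≤ _ := Finset.card_le_card hsub
    calc nu f 1 - nu f 2 ≤ f 1 - f z := by rw [hnu1]; linarith
      _ ≤ f 1 * (8 * Real.pi ^ 2 / N ^ 2) := hgap
      _ ≤ f 1 * (2 ^ 40 * (n : ℝ) ^ (-(4 : ℝ) / s)) := mul_le_mul_of_nonneg_left hNbound hf1nn
      _ = 2 ^ 40 * nu f 1 * (n : ℝ) ^ (-(4 : ℝ) / s) := by rw [hnu1]; ring
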